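/- arXiv:1903.11571 — 2 statements merged into one kernel-verified Lean document; each statement's English description precedes it below -/
import Mathlib

section
/- Let f ∈ C^{1,1}([0,T]×D([0,T],ℝ)) with ∂_t f, ∂_ω f ∈ C(Λ). Then for every (t,ω) ∈ [0,T]×D([0,T],ℝ) the modified vertical derivative D_ω f(t,ω) exists and ∂_ω f(t,ω) = D_ω f(t,ω). -/
open Filter Set MeasureTheory Topology

noncomputable section

/-- The path `ω` stopped at time `t`: `s ↦ ω (s ⊓ t)`. -/
def stopped (ω : ℝ → ℝ) (t : ℝ) : ℝ → ℝ := fun s => ω (min s t)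

/-- `ω : ℝ → ℝ` represents a càdlàg path on `[0,T]`: it is right-continuous at every
`t ∈ [0,T)` and has left limits at every `t ∈ (0,T]`. -/
def Cadlag (T : ℝ) (ω : ℝ → ℝ) : Prop :=
  (∀ t ∈ Set.Ico (0:ℝ) T, ContinuousWithinAt ω (Set.Ici t) t) ∧
  (∀ t ∈ Set.Ioc (0:ℝ) T, ∃ l : ℝ, Filter.Tendsto ω (nhdsWithin t (Set.Iio t)) (nhds l))

/-- Dupire's pseudometric `d_∞((t,ω),(t',ω')) = |t−t'| + sup_{s∈[0,T]} |ω(t∧s) − ω'(t'∧s)|`. -/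
def dInf (T : ℝ) (p q : ℝ × (ℝ → ℝ)) : ℝ :=
  |p.1 - q.1| + ⨆ s : Set.Icc (0:ℝ) T, |p.2 (min p.1 ↑s) - q.2 (min q.1 ↑s)|

/-- `f ∈ C(Λ)`: continuity with respect to `d_∞` at every point of `Λ = [0,T] × D([0,T],ℝ)`. -/
def ContOnLambda (T : ℝ) (f : ℝ → (ℝ → ℝ) → ℝ) : Prop :=
  ∀ t ∈ Set.Icc (0:ℝ) T, ∀ ω : ℝ → ℝ, Cadlag T ω →
    ∀ ε > 0, ∃ δ > 0, ∀ t' ∈ Set.Icc (0:ℝ) T, ∀ ω' : ℝ → ℝ, Cadlag T ω' →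
      dInf T (t, ω) (t', ω') < δ → |f t' ω' - f t ω| < ε

/-- The left limit `g(t−)` with the convention `g(0−) := g(0)`. -/
def leftVal (g : ℝ → ℝ) (t : ℝ) : ℝ := if 0 < t then Function.leftLim g t else g 0

/-- The jump `Δω_t = ω_t − ω_{t−}` (with `ω_{0−} := ω_0`). -/
def jumpAt (ω : ℝ → ℝ) (t : ℝ) : ℝ := ω t - leftVal ω t

/-- `ω ∈ 𝒱`: a càdlàg path of finite (bounded) variation on `[0,T]`. -/
def FV (T : ℝ) (ω : ℝ → ℝ) : Prop := Cadlag T ω ∧ BoundedVariationOn ω (Set.Icc 0 T)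

/-- `I` is the Lebesgue–Stieltjes integral `∫₀ᵗ g dω`: for some (any) decomposition
`ω = F₁ − F₂` on `[0,T]` into nondecreasing right-continuous functions,
`I = ∫_{(0,t]} g dμ₁ − ∫_{(0,t]} g dμ₂`. -/
def IsLSIntegral (T : ℝ) (g ω : ℝ → ℝ) (t I : ℝ) : Prop :=
  ∃ F₁ F₂ : StieltjesFunction ℝ,
    (∀ s ∈ Set.Icc (0:ℝ) T, ω s = F₁ s - F₂ s) ∧
    MeasureTheory.IntegrableOn g (Set.Ioc 0 t) F₁.measure ∧
    MeasureTheory.IntegrableOn g (Set.Ioc 0 t) F₂.measure ∧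
    I = (∫ s in Set.Ioc (0:ℝ) t, g s ∂F₁.measure) - ∫ s in Set.Ioc (0:ℝ) t, g s ∂F₂.measure

/-- The jump term `f(s,ω) − f(s−,ω) − f¹(s−,ω)·Δω_s`. -/
def jumpTerm (f f1 : ℝ → (ℝ → ℝ) → ℝ) (ω : ℝ → ℝ) (s : ℝ) : ℝ :=
  f s ω - leftVal (fun u => f u ω) s - leftVal (fun u => f1 u ω) s * jumpAt ω s

/-- The change of variables formula of Definition 1 along the finite variation path `ω`:
`t ↦ f(t,ω)` has finite variation and
`f(t,ω) = f(0,ω) + ∫₀ᵗ f⁰(s,ω) ds + ∫₀ᵗ f¹(s−,ω) dω_s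
        + Σ_{s≤t} [f(s,ω) − f(s−,ω) − f¹(s−,ω)·Δω_s]`. -/
def ChitaFormula (T : ℝ) (f f0 f1 : ℝ → (ℝ → ℝ) → ℝ) (ω : ℝ → ℝ) : Prop :=
  BoundedVariationOn (fun t => f t ω) (Set.Icc 0 T) ∧
  ∀ t ∈ Set.Icc (0:ℝ) T,
    IntervalIntegrable (fun s => f0 s ω) MeasureTheory.volume 0 t ∧
    Summable (fun s : Set.Icc (0:ℝ) t => jumpTerm f f1 ω ↑s) ∧
    ∃ I : ℝ, IsLSIntegral T (fun s => leftVal (fun u => f1 u ω) s) ω t I ∧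
      f t ω = f 0 ω + (∫ s in (0:ℝ)..t, f0 s ω) + I +
        ∑' s : Set.Icc (0:ℝ) t, jumpTerm f f1 ω ↑s

/-- Definition 1 (Chitashvili differentiability): `f ∈ C(Λ)` is differentiable with
derivatives `f⁰, f¹ ∈ C(Λ)` if the change of variables formula holds along every
càdlàg path of finite variation. -/
def ChitaDiff (T : ℝ) (f f0 f1 : ℝ → (ℝ → ℝ) → ℝ) : Prop :=
  ContOnLambda T f ∧ ContOnLambda T f0 ∧ ContOnLambda T f1 ∧
  ∀ ω : ℝ → ℝ, FV T ω → ChitaFormula T f f0 f1 ω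

/-- Dupire's bumped path `ω + h·1_{[t,∞)}` (which agrees with `ω + h·1_{[t,T]}` on `[0,T]`). -/
def bump (ω : ℝ → ℝ) (t h : ℝ) : ℝ → ℝ := fun s => ω s + if t ≤ s then h else 0

/-- Dupire's horizontal (time) derivative:
`∂_t f(t,ω) = lim_{h→0+} (f(t+h,ω^t) − f(t,ω))/h`. -/
def HasHorizDerivAt (f : ℝ → (ℝ → ℝ) → ℝ) (t : ℝ) (ω : ℝ → ℝ) (d : ℝ) : Prop :=
  Filter.Tendsto (fun h => (f (t + h) (stopped ω t) - f t ω) / h)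
    (nhdsWithin 0 (Set.Ioi 0)) (nhds d)

/-- Dupire's vertical (space) derivative:
`∂_ω f(t,ω) = lim_{h→0} (f(t,ω + h·1_{[t,T]}) − f(t,ω))/h`. -/
def HasVertDerivAt (f : ℝ → (ℝ → ℝ) → ℝ) (t : ℝ) (ω : ℝ → ℝ) (d : ℝ) : Prop :=
  Filter.Tendsto (fun h => (f t (bump ω t h) - f t ω) / h)
    (nhdsWithin 0 {(0:ℝ)}ᶜ) (nhds d)

/-- `χ_{t,h}(s) = (s−t)·1_{(t,t+h]}(s) + h·1_{(t+h,∞)}(s)` (continuous path deformation). -/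
def chi (t h : ℝ) : ℝ → ℝ := fun s => if s ≤ t then 0 else if s ≤ t + h then s - t else h

/-- The modified vertical derivative
`D_ω f(t,ω) = lim_{h→0+} (f(t+h, ω^t + χ_{t,h}) − f(t+h, ω^t))/h`. -/
def HasDVertDerivAt (f : ℝ → (ℝ → ℝ) → ℝ) (t : ℝ) (ω : ℝ → ℝ) (d : ℝ) : Prop :=
  Filter.Tendsto
    (fun h => (f (t + h) (fun s => stopped ω t s + chi t h s) - f (t + h) (stopped ω t)) / h)
    (nhdsWithin 0 (Set.Ioi 0)) (nhds d)

/-- Continuity of `f` in `ω` (w.r.t. `d_∞`) at each fixed time. -/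
def ContAtFixedTimes (T : ℝ) (f : ℝ → (ℝ → ℝ) → ℝ) : Prop :=
  ∀ t ∈ Set.Icc (0:ℝ) T, ∀ ω : ℝ → ℝ, Cadlag T ω →
    ∀ ε > 0, ∃ δ > 0, ∀ ω' : ℝ → ℝ, Cadlag T ω' →
      dInf T (t, ω) (t, ω') < δ → |f t ω' - f t ω| < ε

/-- `f ∈ C^{1,1}([0,T]×D)` in the Dupire sense, with horizontal derivative `ft` and
vertical derivative `fw`: `f ∈ C(Λ)`, `∂_t f` exists (for `t < T`) and is continuous
at fixed times, and `∂_ω f` exists and belongs to `C(Λ)`. -/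
def C11 (T : ℝ) (f ft fw : ℝ → (ℝ → ℝ) → ℝ) : Prop :=
  ContOnLambda T f ∧
  (∀ t ∈ Set.Ico (0:ℝ) T, ∀ ω : ℝ → ℝ, Cadlag T ω → HasHorizDerivAt f t ω (ft t ω)) ∧
  ContAtFixedTimes T ft ∧
  (∀ t ∈ Set.Icc (0:ℝ) T, ∀ ω : ℝ → ℝ, Cadlag T ω → HasVertDerivAt f t ω (fw t ω)) ∧
  ContOnLambda T fw

/-- A path that is constant from time `c` on. -/
def ConstAfter (η : ℝ → ℝ) (c : ℝ) : Prop := ∀ σ, c ≤ σ → η σ = η c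

lemma ConstAfter.mono' {η : ℝ → ℝ} {c c' : ℝ} (h : ConstAfter η c) (hcc : c ≤ c') :
    ConstAfter η c' := fun σ hσ => by rw [h σ (hcc.trans hσ), h c' hcc]

lemma constAfter_stopped (ω : ℝ → ℝ) (t : ℝ) : ConstAfter (stopped ω t) t := fun σ hσ => by
  simp [stopped, min_eq_right hσ]

lemma stopped_eq_self {η : ℝ → ℝ} {c s : ℝ} (h : ConstAfter η c) (hcs : c ≤ s) :
    stopped η s = η := by
  funext σ
  rcases le_total σ s with hσ | hσ
  · simp [stopped, min_eq_left hσ]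
  · simp only [stopped, min_eq_right hσ]
    rw [h σ (hcs.trans hσ), h s hcs]

lemma constAfter_min_eq {η : ℝ → ℝ} {a s x : ℝ} (h : ConstAfter η a) (hs : a ≤ s) (hx : a ≤ x)
    (σ : ℝ) : η (min s σ) = η (min x σ) := by
  rcases le_total σ a with hσ | hσ
  · rw [min_eq_right (hσ.trans hs), min_eq_right (hσ.trans hx)]
  · rw [h _ (le_min hs hσ), h _ (le_min hx hσ)]

lemma stopped_min {ω : ℝ → ℝ} {t s : ℝ} (hts : t ≤ s) (σ : ℝ) :
    stopped ω t (min s σ) = stopped ω t σ := by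
  unfold stopped
  congr 1
  rcases le_total σ s with h | h
  · rw [min_eq_right h]
  · rw [min_eq_left h, min_eq_right hts, min_eq_right (hts.trans h)]

lemma bump_zero (η : ℝ → ℝ) (s : ℝ) : bump η s 0 = η := funext fun σ => by simp [bump]

lemma bump_bump (η : ℝ → ℝ) (s a b : ℝ) : bump (bump η s a) s b = bump η s (a + b) :=
  funext fun σ => by by_cases h : s ≤ σ <;> simp [bump, h] <;> ring

lemma constAfter_bump {η : ℝ → ℝ} {c s : ℝ} (h : ConstAfter η c) (hcs : c ≤ s) (a : ℝ) :
    ConstAfter (bump η s a) s := fun σ hσ => by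
  simp only [bump, if_pos hσ, if_pos (le_refl s)]
  rw [h σ (hcs.trans hσ), h s hcs]
lemma cadlag_stopped {T : ℝ} {ω : ℝ → ℝ} (hω : Cadlag T ω) {t : ℝ} (ht : t ∈ Set.Ico (0:ℝ) T) :
    Cadlag T (stopped ω t) := by
  constructor
  · intro u hu
    by_cases hut : u < t
    · have hg : ContinuousWithinAt ω (Set.Ici u) (min u t) := by
        rw [min_eq_left hut.le]; exact hω.1 u hu
      have hmin : ContinuousWithinAt (fun s : ℝ => min s t) (Set.Ici u) u :=
        (continuous_min.comp (continuous_id.prodMk continuous_const)).continuousWithinAt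
      exact ContinuousWithinAt.comp (g := ω) (f := fun s : ℝ => min s t)
        (s := Set.Ici u) (t := Set.Ici u) hg hmin (fun s hs => le_min hs hut.le)
    · push_neg at hut
      have hval : stopped ω t u = ω t := by simp [stopped, min_eq_right hut]
      refine (continuousWithinAt_const (b := ω t)).congr (fun s hs => ?_) hval
      simp [stopped, min_eq_right (hut.trans hs)]
  · intro u hu
    by_cases hut : u ≤ t
    · obtain ⟨l, hl⟩ := hω.2 u hu
      refine ⟨l, Filter.Tendsto.congr' ?_ hl⟩
      filter_upwards [self_mem_nhdsWithin] with s hs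
      simp [stopped, min_eq_left ((le_of_lt hs).trans hut)]
    · push_neg at hut
      refine ⟨ω t, ?_⟩
      have hev : ∀ᶠ s in nhdsWithin u (Set.Iio u), (fun _ : ℝ => ω t) s = stopped ω t s := by
        filter_upwards [mem_nhdsWithin_of_mem_nhds (Ioi_mem_nhds hut)] with s hs
        simp [stopped, min_eq_right (le_of_lt (Set.mem_Ioi.1 hs))]
      exact Filter.Tendsto.congr' hev tendsto_const_nhds

lemma cadlag_bump {T : ℝ} {η : ℝ → ℝ} (hη : Cadlag T η) (s a : ℝ) : Cadlag T (bump η s a) := by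
  constructor
  · intro u hu
    have hstep : ContinuousWithinAt (fun σ : ℝ => if s ≤ σ then a else 0) (Set.Ici u) u := by
      by_cases hsu : s ≤ u
      · exact (continuousWithinAt_const (b := a)).congr
          (fun y hy => by rw [if_pos (hsu.trans hy)]) (by rw [if_pos hsu])
      · push_neg at hsu
        have hev : (fun σ : ℝ => if s ≤ σ then a else 0) =ᶠ[nhdsWithin u (Set.Ici u)]
            (fun _ => (0:ℝ)) := by
          filter_upwards [mem_nhdsWithin_of_mem_nhds (Iio_mem_nhds hsu)] with y hy
          rw [if_neg (not_le.2 hy)]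
        exact (continuousWithinAt_const (b := (0:ℝ))).congr_of_eventuallyEq hev
          (by rw [if_neg (not_le.2 hsu)])
    exact (hη.1 u hu).add hstep
  · intro u hu
    obtain ⟨l, hl⟩ := hη.2 u hu
    by_cases hsu : s < u
    · refine ⟨l + a, Filter.Tendsto.congr' ?_ (hl.add_const a)⟩
      filter_upwards [mem_nhdsWithin_of_mem_nhds (Ioi_mem_nhds hsu)] with σ hσ
      simp [bump, if_pos (le_of_lt (Set.mem_Ioi.1 hσ))]
    · push_neg at hsu
      refine ⟨l, Filter.Tendsto.congr' ?_ hl⟩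
      filter_upwards [self_mem_nhdsWithin] with σ hσ
      have : ¬ s ≤ σ := not_le.2 (lt_of_lt_of_le hσ hsu)
      simp [bump, this]

lemma cadlag_add_cont {T : ℝ} {η g : ℝ → ℝ} (hη : Cadlag T η) (hg : Continuous g) :
    Cadlag T (fun σ => η σ + g σ) := by
  constructor
  · intro u hu; exact (hη.1 u hu).add hg.continuousWithinAt
  · intro u hu
    obtain ⟨l, hl⟩ := hη.2 u hu
    exact ⟨l + g u, hl.add ((hg.tendsto u).mono_left nhdsWithin_le_nhds)⟩

lemma chi_eq (t h : ℝ) (hh : 0 ≤ h) : chi t h = fun σ => min (max (σ - t) 0) h := by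
  funext σ
  unfold chi
  by_cases h1 : σ ≤ t
  · rw [if_pos h1, max_eq_right (by linarith), min_eq_left hh]
  · push_neg at h1
    rw [if_neg (not_le.2 h1), max_eq_left (by linarith)]
    by_cases h2 : σ ≤ t + h
    · rw [if_pos h2, min_eq_left (by linarith)]
    · push_neg at h2
      rw [if_neg (not_le.2 h2), min_eq_right (by linarith)]

lemma continuous_chi (t h : ℝ) (hh : 0 ≤ h) : Continuous (chi t h) := by
  rw [chi_eq t h hh]
  exact ((continuous_id.sub continuous_const).max continuous_const).min continuous_const
lemma hasDerivWithinAt_Ici_of_tendsto {g : ℝ → ℝ} {x d : ℝ}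
    (h : Filter.Tendsto (fun k => (g (x + k) - g x) / k) (nhdsWithin 0 (Set.Ioi 0)) (nhds d)) :
    HasDerivWithinAt g d (Set.Ici x) x := by
  rw [hasDerivWithinAt_iff_tendsto_slope, Set.Ici_sdiff_left]
  have h1 : Filter.Tendsto (fun y : ℝ => y - x) (nhdsWithin x (Set.Ioi x))
      (nhdsWithin 0 (Set.Ioi 0)) := by
    rw [tendsto_nhdsWithin_iff]
    constructor
    · have h0 : Filter.Tendsto (fun y : ℝ => y - x) (nhds x) (nhds 0) := by
        simpa using (continuous_sub_right x).tendsto x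
      exact h0.mono_left nhdsWithin_le_nhds
    · filter_upwards [self_mem_nhdsWithin] with y hy
      exact sub_pos.2 (Set.mem_Ioi.1 hy)
  refine (h.comp h1).congr fun y => ?_
  have hxy : x + (y - x) = y := by ring
  simp only [Function.comp]
  rw [hxy, slope_def_field]

lemma hasDerivAt_of_tendsto_punctured {g : ℝ → ℝ} {x d : ℝ}
    (h : Filter.Tendsto (fun k => (g (x + k) - g x) / k) (nhdsWithin 0 {(0:ℝ)}ᶜ) (nhds d)) :
    HasDerivAt g d x := by
  rw [hasDerivAt_iff_tendsto_slope]
  have h1 : Filter.Tendsto (fun y : ℝ => y - x) (nhdsWithin x {x}ᶜ)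
      (nhdsWithin 0 {(0:ℝ)}ᶜ) := by
    rw [tendsto_nhdsWithin_iff]
    constructor
    · have h0 : Filter.Tendsto (fun y : ℝ => y - x) (nhds x) (nhds 0) := by
        simpa using (continuous_sub_right x).tendsto x
      exact h0.mono_left nhdsWithin_le_nhds
    · filter_upwards [self_mem_nhdsWithin] with y hy
      exact Set.mem_compl_singleton_iff.2 (sub_ne_zero_of_ne hy)
  refine (h.comp h1).congr fun y => ?_
  have hxy : x + (y - x) = y := by ring
  simp only [Function.comp]
  rw [hxy, slope_def_field]

lemma dInf_le' {T : ℝ} (h0T : 0 ≤ T) {t t' : ℝ} {ω ω' : ℝ → ℝ} {C : ℝ}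
    (hb : ∀ σ : ℝ, |ω (min t σ) - ω' (min t' σ)| ≤ C) :
    dInf T (t, ω) (t', ω') ≤ |t - t'| + C := by
  have : Nonempty ↥(Set.Icc (0:ℝ) T) := ⟨⟨0, Set.mem_Icc.2 ⟨le_refl 0, h0T⟩⟩⟩
  unfold dInf
  refine add_le_add le_rfl (ciSup_le fun (σ : ↥(Set.Icc (0:ℝ) T)) => ?_)
  exact hb ↑σ

lemma dInf_eq_of_constAfter {T : ℝ} (h0T : 0 ≤ T) {η : ℝ → ℝ} {a s x : ℝ}
    (h : ConstAfter η a) (hs : a ≤ s) (hx : a ≤ x) :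
    dInf T (s, η) (x, η) ≤ |s - x| := by
  have := dInf_le' (t := s) (t' := x) (ω := η) (ω' := η) h0T (C := 0)
    (fun σ => by rw [constAfter_min_eq h hs hx σ, sub_self, abs_zero])
  simpa using this
/-- The staircase approximation to `stopped ω t + chi t (i*k)`. -/
def approxPath (ω : ℝ → ℝ) (t k : ℝ) : ℕ → ℝ → ℝ
  | 0 => stopped ω t
  | i + 1 => bump (approxPath ω t k i) (t + (i + 1 : ℕ) * k) k

lemma cadlag_approx {T : ℝ} {ω : ℝ → ℝ} (hω : Cadlag T ω) {t : ℝ} (ht : t ∈ Set.Ico (0:ℝ) T)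
    (k : ℝ) : ∀ i, Cadlag T (approxPath ω t k i)
  | 0 => cadlag_stopped hω ht
  | i + 1 => cadlag_bump (cadlag_approx hω ht k i) _ _

lemma constAfter_approx {ω : ℝ → ℝ} {t k : ℝ} (hk : 0 ≤ k) :
    ∀ i : ℕ, ConstAfter (approxPath ω t k i) (t + i * k)
  | 0 => by
    simpa [approxPath] using (constAfter_stopped ω t)
  | i + 1 => by
    have h1 := constAfter_approx (ω := ω) (t := t) hk i
    have h2 : t + (i : ℝ) * k ≤ t + ((i : ℕ) + 1 : ℕ) * k := by push_cast; nlinarith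
    exact constAfter_bump h1 h2 k

lemma approx_dist {ω : ℝ → ℝ} {t k : ℝ} (hk : 0 ≤ k) :
    ∀ (i : ℕ) (σ : ℝ), |approxPath ω t k i σ - stopped ω t σ| ≤ i * k
  | 0, σ => by simp [approxPath]
  | i + 1, σ => by
    have h1 := approx_dist (ω := ω) (t := t) hk i σ
    have h2 : |(if t + ((i : ℕ) + 1 : ℕ) * k ≤ σ then k else 0)| ≤ k := by
      split <;> simp [abs_of_nonneg hk, hk]
    calc |approxPath ω t k (i+1) σ - stopped ω t σ|
        = |(approxPath ω t k i σ - stopped ω t σ) +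
            (if t + ((i : ℕ) + 1 : ℕ) * k ≤ σ then k else 0)| := by
          simp only [approxPath, bump]; ring_nf
      _ ≤ i * k + k := le_trans (abs_add_le _ _) (add_le_add h1 h2)
      _ = ((i : ℕ) + 1 : ℕ) * k := by push_cast; ring

lemma approx_eq {ω : ℝ → ℝ} {t k : ℝ} (hk : 0 < k) :
    ∀ (i : ℕ) (σ : ℝ), approxPath ω t k i σ =
      stopped ω t σ + k * (min i ⌊(σ - t)/k⌋₊ : ℕ)
  | 0, σ => by simp [approxPath]
  | i + 1, σ => by
    have h1 := approx_eq (ω := ω) (t := t) hk i σ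
    by_cases hcase : t + ((i : ℕ) + 1 : ℕ) * k ≤ σ
    · have hle : (i + 1 : ℕ) ≤ ⌊(σ - t)/k⌋₊ := by
        apply Nat.le_floor
        rw [le_div_iff₀ hk]
        push_cast at hcase ⊢
        linarith
      have hmin1 : min (i + 1 : ℕ) ⌊(σ - t)/k⌋₊ = i + 1 := min_eq_left hle
      have hmin2 : min (i : ℕ) ⌊(σ - t)/k⌋₊ = i := min_eq_left (le_trans (Nat.le_succ i) hle)
      simp only [approxPath, bump, if_pos hcase, h1, hmin1, hmin2]
      push_cast; ring
    · have hlt : ⌊(σ - t)/k⌋₊ ≤ i := by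
        by_contra hc
        push_neg at hc
        push_neg at hcase
        have h0 : (0:ℝ) ≤ (σ - t)/k := by
          by_contra h0
          push_neg at h0
          rw [Nat.floor_eq_zero.2 (lt_of_lt_of_le h0 zero_le_one)] at hc
          exact Nat.not_lt_zero i hc
        have hF := Nat.floor_le h0
        have hge : ((i:ℝ) + 1) ≤ ((⌊(σ - t)/k⌋₊ : ℕ) : ℝ) := by exact_mod_cast hc
        have hfin : ((i:ℝ)+1) ≤ (σ - t)/k := le_trans hge hF
        rw [le_div_iff₀ hk] at hfin
        push_cast at hcase
        linarith
      have hmin1 : min (i + 1 : ℕ) ⌊(σ - t)/k⌋₊ = ⌊(σ - t)/k⌋₊ :=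
        min_eq_right (le_trans hlt (Nat.le_succ i))
      have hmin2 : min (i : ℕ) ⌊(σ - t)/k⌋₊ = ⌊(σ - t)/k⌋₊ := min_eq_right hlt
      simp only [approxPath, bump, if_neg hcase, h1, hmin1, hmin2]
      ring
lemma approx_close {ω : ℝ → ℝ} {t k : ℝ} (hk : 0 < k) (n : ℕ) (σ : ℝ) :
    |approxPath ω t k n σ - (stopped ω t σ + chi t (n * k) σ)| ≤ k := by
  rw [approx_eq hk n σ]
  have hbase : stopped ω t σ + k * (min n ⌊(σ - t)/k⌋₊ : ℕ) -
      (stopped ω t σ + chi t (n * k) σ) = k * (min n ⌊(σ - t)/k⌋₊ : ℕ) - chi t (n * k) σ := by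
    ring
  rw [hbase]
  unfold chi
  by_cases h1 : σ ≤ t
  · have hF : ⌊(σ - t)/k⌋₊ = 0 := by
      apply Nat.floor_eq_zero.2
      have : (σ - t)/k ≤ 0 := div_nonpos_of_nonpos_of_nonneg (by linarith) hk.le
      linarith
    rw [if_pos h1, hF]
    simp [hk.le]
  · push_neg at h1
    have h0 : (0:ℝ) ≤ (σ - t)/k := div_nonneg (by linarith) hk.le
    rw [if_neg (not_le.2 h1)]
    by_cases h2 : σ ≤ t + n * k
    · have hFn : ⌊(σ - t)/k⌋₊ ≤ n := by
        have : (σ - t)/k ≤ n := by rw [div_le_iff₀ hk]; linarith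
        calc ⌊(σ - t)/k⌋₊ ≤ ⌊(n:ℝ)⌋₊ := Nat.floor_le_floor this
          _ = n := Nat.floor_natCast n
      rw [if_pos h2, min_eq_right hFn]
      have hl : k * (⌊(σ - t)/k⌋₊ : ℕ) ≤ σ - t := by
        rw [mul_comm, ← le_div_iff₀ hk]
        exact Nat.floor_le h0
      have hu : σ - t < k * (⌊(σ - t)/k⌋₊ : ℕ) + k := by
        have := Nat.lt_floor_add_one ((σ - t)/k)
        rw [div_lt_iff₀ hk] at this
        push_cast at this ⊢
        linarith
      rw [abs_le]
      constructor <;> linarith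
    · push_neg at h2
      have hFn : n ≤ ⌊(σ - t)/k⌋₊ := by
        apply Nat.le_floor
        rw [le_div_iff₀ hk]
        linarith
      rw [if_neg (not_le.2 h2), min_eq_left hFn]
      have hz : k * ((n:ℕ):ℝ) - (n:ℝ) * k = 0 := by ring
      rw [hz]
      simp [hk.le]
lemma horiz_est {T : ℝ} {f ft : ℝ → (ℝ → ℝ) → ℝ}
    (hfC : ContOnLambda T f)
    (hder : ∀ s ∈ Set.Ico (0:ℝ) T, ∀ η : ℝ → ℝ, Cadlag T η → HasHorizDerivAt f s η (ft s η))
    {η : ℝ → ℝ} (hη : Cadlag T η) {a b : ℝ} (hab : a ≤ b) (ha : 0 ≤ a) (hbT : b ≤ T)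
    (hca : ConstAfter η a) {c ε : ℝ}
    (hband : ∀ s ∈ Set.Ico a b, |ft s η - c| ≤ ε) :
    |f b η - f a η - (b - a) * c| ≤ ε * (b - a) := by
  have hsub : Set.Icc a b ⊆ Set.Icc 0 T := fun x hx => ⟨ha.trans hx.1, hx.2.trans hbT⟩
  have hcont : ContinuousOn (fun s => f s η - s * c) (Set.Icc a b) := by
    apply ContinuousOn.sub
    · intro s hs
      have hsT : s ∈ Set.Icc (0:ℝ) T := hsub hs
      rw [ContinuousWithinAt, Metric.tendsto_nhdsWithin_nhds]
      intro ε' hε'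
      obtain ⟨δ, hδ, hc2⟩ := hfC s hsT η hη ε' hε'
      refine ⟨δ, hδ, ?_⟩
      intro x hx hdist
      have hxT : x ∈ Set.Icc (0:ℝ) T := hsub hx
      have h0T : (0:ℝ) ≤ T := le_trans (le_trans ha hab) hbT
      have hd : dInf T (s, η) (x, η) < δ := by
        refine lt_of_le_of_lt (dInf_eq_of_constAfter h0T hca hs.1 hx.1) ?_
        rwa [Real.dist_eq, abs_sub_comm] at hdist
      have := hc2 x hxT η hη hd
      rwa [Real.dist_eq]
    · exact (continuous_id.mul continuous_const).continuousOn
  have hderiv : ∀ s ∈ Set.Ico a b,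
      HasDerivWithinAt (fun s => f s η - s * c) (ft s η - c) (Set.Ici s) s := by
    intro s hs
    have h1 : HasDerivWithinAt (fun s => f s η) (ft s η) (Set.Ici s) s := by
      apply hasDerivWithinAt_Ici_of_tendsto
      have hst : s ∈ Set.Ico (0:ℝ) T := ⟨ha.trans hs.1, lt_of_lt_of_le hs.2 hbT⟩
      have := hder s hst η hη
      unfold HasHorizDerivAt at this
      rwa [stopped_eq_self hca hs.1] at this
    exact h1.sub ((hasDerivAt_mul_const c).hasDerivWithinAt)
  have hbound : ∀ s ∈ Set.Ico a b, ‖ft s η - c‖ ≤ ε := fun s hs => by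
    rw [Real.norm_eq_abs]; exact hband s hs
  have := norm_image_sub_le_of_norm_deriv_right_le_segment hcont hderiv hbound b
    (Set.right_mem_Icc.2 hab)
  rw [Real.norm_eq_abs] at this
  have heq : f b η - b * c - (f a η - a * c) = f b η - f a η - (b - a) * c := by ring
  rw [heq] at this
  linarith [this]

lemma vert_est {T : ℝ} {f fw : ℝ → (ℝ → ℝ) → ℝ}
    (hder : ∀ s ∈ Set.Icc (0:ℝ) T, ∀ η : ℝ → ℝ, Cadlag T η → HasVertDerivAt f s η (fw s η))
    {η : ℝ → ℝ} (hη : Cadlag T η) {b : ℝ} (hb : b ∈ Set.Icc (0:ℝ) T) {k c' ε : ℝ} (hk : 0 ≤ k)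
    (hband : ∀ x ∈ Set.Ico (0:ℝ) k, |fw b (bump η b x) - c'| ≤ ε) :
    |f b (bump η b k) - f b η - k * c'| ≤ ε * k := by
  have hG : ∀ x : ℝ, HasDerivAt (fun x => f b (bump η b x) - x * c')
      (fw b (bump η b x) - c') x := by
    intro x
    have h1 : HasDerivAt (fun x => f b (bump η b x)) (fw b (bump η b x)) x := by
      apply hasDerivAt_of_tendsto_punctured
      have := hder b hb (bump η b x) (cadlag_bump hη b x)
      unfold HasVertDerivAt at this
      refine this.congr fun h' => ?_
      rw [bump_bump]
    exact h1.sub (hasDerivAt_mul_const c')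
  have := norm_image_sub_le_of_norm_deriv_right_le_segment
    (f := fun x => f b (bump η b x) - x * c') (f' := fun x => fw b (bump η b x) - c')
    (fun x _ => (hG x).continuousAt.continuousWithinAt)
    (fun x _ => (hG x).hasDerivWithinAt)
    (fun x hx => by rw [Real.norm_eq_abs]; exact hband x hx) k
    (Set.right_mem_Icc.2 hk)
  rw [Real.norm_eq_abs] at this
  simp only [bump_zero] at this
  have heq : f b (bump η b k) - k * c' - (f b η - 0 * c') =
      f b (bump η b k) - f b η - k * c' := by ring
  rw [heq] at this
  linarith [this]
lemma stair_est {T : ℝ} {f ft fw : ℝ → (ℝ → ℝ) → ℝ}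
    (hfC : ContOnLambda T f)
    (hhd : ∀ s ∈ Set.Ico (0:ℝ) T, ∀ η : ℝ → ℝ, Cadlag T η → HasHorizDerivAt f s η (ft s η))
    (hvd : ∀ s ∈ Set.Icc (0:ℝ) T, ∀ η : ℝ → ℝ, Cadlag T η → HasVertDerivAt f s η (fw s η))
    {t : ℝ} {ω : ℝ → ℝ} (hω : Cadlag T ω) (ht : t ∈ Set.Ico (0:ℝ) T)
    {h : ℝ} (hh0 : 0 < h) (hthT : t + h ≤ T)
    {ε' δ₁ δ₂ : ℝ}
    (H₁ : ∀ s ∈ Set.Icc (0:ℝ) T, ∀ η : ℝ → ℝ, Cadlag T η →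
        dInf T (t, stopped ω t) (s, η) < δ₁ → |ft s η - ft t (stopped ω t)| < ε')
    (H₂ : ∀ s ∈ Set.Icc (0:ℝ) T, ∀ η : ℝ → ℝ, Cadlag T η →
        dInf T (t, stopped ω t) (s, η) < δ₂ → |fw s η - fw t (stopped ω t)| < ε')
    (hδ₁ : 3 * h < δ₁) (hδ₂ : 3 * h < δ₂)
    {n : ℕ} (hn : 1 ≤ n) :
    |f (t + h) (approxPath ω t (h/n) n) - f t (stopped ω t)
      - h * (ft t (stopped ω t) + fw t (stopped ω t))| ≤ 2 * ε' * h := by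
  have h0T : (0:ℝ) ≤ T := le_trans (le_trans ht.1 (by linarith)) hthT
  have hnR : (0:ℝ) < (n:ℝ) := by exact_mod_cast Nat.lt_of_lt_of_le Nat.zero_lt_one hn
  set k := h / n with hkdef
  have hk : 0 < k := div_pos hh0 hnR
  have hnk : (n:ℝ) * k = h := by rw [hkdef]; field_simp
  set c := ft t (stopped ω t) with hcdef
  set c' := fw t (stopped ω t) with hc'def
  -- pointwise distance of approx paths to the stopped path
  have hdist_pt : ∀ i : ℕ, i ≤ n → ∀ τ : ℝ, |approxPath ω t k i τ - stopped ω t τ| ≤ h := by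
    intro i hin τ
    refine le_trans (approx_dist hk.le i τ) ?_
    rw [← hnk]
    have : (i:ℝ) ≤ (n:ℝ) := by exact_mod_cast hin
    nlinarith
  have main : ∀ i : ℕ, i ≤ n →
      |f (t + i * k) (approxPath ω t k i) - f t (stopped ω t) - ((i:ℝ) * k) * (c + c')|
        ≤ 2 * ε' * ((i:ℝ) * k) := by
    intro i
    induction i with
    | zero =>
      intro _
      norm_num [approxPath]
    | succ i ih =>
      intro hin
      have hi_n : i ≤ n := le_trans (Nat.le_succ i) hin
      have hik : (i:ℝ) * k ≤ h := by
        rw [← hnk]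
        have : (i:ℝ) ≤ (n:ℝ) := by exact_mod_cast hi_n
        nlinarith
      have hik1 : ((i:ℝ) + 1) * k ≤ h := by
        rw [← hnk]
        have : (i:ℝ) + 1 ≤ (n:ℝ) := by exact_mod_cast hin
        nlinarith
      have hε'nn : 0 ≤ ε' := by
        have := H₁ t ⟨ht.1, ht.2.le⟩ (stopped ω t) (cadlag_stopped hω ht) ?_
        · exact le_of_lt (lt_of_le_of_lt (abs_nonneg _) this)
        · refine lt_of_le_of_lt (dInf_eq_of_constAfter h0T (constAfter_stopped ω t)
            (le_refl t) (le_refl t)) ?_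
          simp only [sub_self, abs_zero]
          linarith
      set a := t + (i:ℕ) * k with hadef
      set b := t + ((i:ℕ) + 1 : ℕ) * k with hbdef
      have hbr : b = t + ((i:ℝ) + 1) * k := by rw [hbdef]; push_cast; ring
      have hta : t ≤ a := by
        rw [hadef]; push_cast; nlinarith [Nat.cast_nonneg (α := ℝ) i]
      have hab : a ≤ b := by rw [hadef, hbr]; push_cast; nlinarith
      have ha0 : 0 ≤ a := le_trans ht.1 hta
      have hbT : b ≤ T := by rw [hbr]; linarith
      have hβ : Cadlag T (approxPath ω t k i) := cadlag_approx hω ht k i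
      have hca : ConstAfter (approxPath ω t k i) a := constAfter_approx hk.le i
      -- Horizontal estimate on [a,b]
      have hband1 : ∀ s ∈ Set.Ico a b, |ft s (approxPath ω t k i) - c| ≤ ε' := by
        intro s hs
        have hts : t ≤ s := le_trans hta hs.1
        have hsT : s ∈ Set.Icc (0:ℝ) T := ⟨le_trans ha0 hs.1, le_trans hs.2.le hbT⟩
        have hdd : dInf T (t, stopped ω t) (s, approxPath ω t k i) < δ₁ := by
          refine lt_of_le_of_lt (dInf_le' h0T (C := h) ?_) ?_
          · intro σ
            rw [stopped_min (le_refl t) σ]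
            have e1 : stopped ω t (min s σ) = stopped ω t σ := stopped_min hts σ
            have := hdist_pt i hi_n (min s σ)
            rw [e1] at this
            rw [abs_sub_comm]
            exact this
          · have hst : s - t ≤ h := by
              have := hs.2
              rw [hbr] at this
              linarith
            have : |t - s| ≤ h := by rw [abs_sub_comm, abs_of_nonneg (by linarith)]; linarith
            linarith
        exact (H₁ s hsT _ hβ hdd).le
      have hH := horiz_est hfC hhd hβ hab ha0 hbT hca hband1
      -- Vertical estimate at b
      have hbIcc : b ∈ Set.Icc (0:ℝ) T := ⟨le_trans ha0 hab, hbT⟩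
      have hband2 : ∀ x ∈ Set.Ico (0:ℝ) k, |fw b (bump (approxPath ω t k i) b x) - c'| ≤ ε' := by
        intro x hx
        have hdd : dInf T (t, stopped ω t) (b, bump (approxPath ω t k i) b x) < δ₂ := by
          refine lt_of_le_of_lt (dInf_le' h0T (C := 2 * h) ?_) ?_
          · intro σ
            set τ := min b σ with hτdef
            rw [stopped_min (le_refl t) σ]
            have e1 : stopped ω t τ = stopped ω t σ := stopped_min (le_trans hta hab) σ
            have e2 : |approxPath ω t k i τ - stopped ω t τ| ≤ h := hdist_pt i hi_n τ
            have e3 : |(if b ≤ τ then x else 0)| ≤ h := by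
              split
              · rw [abs_of_nonneg hx.1]; linarith [hx.2, hik1, hk.le]
              · simp [hh0.le]
            have : bump (approxPath ω t k i) b x τ = approxPath ω t k i τ +
                (if b ≤ τ then x else 0) := rfl
            rw [abs_sub_comm, this]
            calc |approxPath ω t k i τ + (if b ≤ τ then x else 0) - stopped ω t σ|
                = |(approxPath ω t k i τ - stopped ω t τ) + (if b ≤ τ then x else 0)| := by
                  rw [e1]; ring_nf
              _ ≤ h + h := le_trans (abs_add_le _ _) (add_le_add e2 e3)
              _ = 2 * h := by ring
          · have : |t - b| ≤ h := by
              rw [hbr, abs_sub_comm, abs_of_nonneg (by nlinarith [Nat.cast_nonneg (α := ℝ) i])]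
              nlinarith [Nat.cast_nonneg (α := ℝ) i]
            linarith
        exact (H₂ b hbIcc _ (cadlag_bump hβ b x) hdd).le
      have hV := vert_est hvd hβ hbIcc hk.le hband2
      -- combine
      have hstep : bump (approxPath ω t k i) b k = approxPath ω t k (i + 1) := by
        rw [hbdef]; rfl
      rw [hstep] at hV
      have hIH := ih hi_n
      have hba : b - a = k := by rw [hadef, hbr]; push_cast; ring
      rw [hba] at hH
      have tri : ∀ A B C : ℝ, |A + B + C| ≤ |A| + |B| + |C| := fun A B C =>
        le_trans (abs_add_le _ _) (add_le_add_left (abs_add_le A B) _)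
      have hsplit : f b (approxPath ω t k (i+1)) - f t (stopped ω t)
          - (((i:ℝ)+1) * k) * (c + c')
          = (f b (approxPath ω t k (i+1)) - f b (approxPath ω t k i) - k * c')
          + (f b (approxPath ω t k i) - f a (approxPath ω t k i) - k * c)
          + (f a (approxPath ω t k i) - f t (stopped ω t) - ((i:ℝ) * k) * (c + c')) := by
        ring
      have hgoal : |f b (approxPath ω t k (i+1)) - f t (stopped ω t)
          - (((i:ℝ)+1) * k) * (c + c')| ≤ 2 * ε' * (((i:ℝ)+1) * k) := by
        rw [hsplit]
        calc |_ + _ + _| ≤ _ := tri _ _ _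
          _ ≤ ε' * k + ε' * k + 2 * ε' * ((i:ℝ) * k) := add_le_add (add_le_add hV hH) hIH
          _ = 2 * ε' * (((i:ℝ)+1) * k) := by ring
      have hcast : ((i+1 : ℕ) : ℝ) = (i:ℝ) + 1 := by push_cast; ring
      rw [hcast]
      exact hgoal
  have := main n (le_refl n)
  rw [hnk] at this
  exact this
/-- Corollary 1: if `f ∈ C^{1,1}([0,T]×D([0,T],ℝ))` with
`∂_t f, ∂_ω f ∈ C(Λ)`, then for every `(t,ω) ∈ [0,T)×D([0,T],ℝ)` the modified vertical
derivative `D_ω f(t,ω)` exists and `∂_ω f(t,ω) = D_ω f(t,ω)`. -/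
theorem stmt4 (T : ℝ) (hT : 0 < T) (f ft fw : ℝ → (ℝ → ℝ) → ℝ)
    (hf : C11 T f ft fw) (hftC : ContOnLambda T ft) (hfwC : ContOnLambda T fw) :
    ∀ t ∈ Set.Ico (0:ℝ) T, ∀ ω : ℝ → ℝ, Cadlag T ω → HasDVertDerivAt f t ω (fw t ω) := by
  obtain ⟨hfC, hhd, _hftT, hvd, _hfwC0⟩ := hf
  intro t ht ω hω
  have h0T : (0:ℝ) ≤ T := hT.le
  have hωt : Cadlag T (stopped ω t) := cadlag_stopped hω ht
  have htT : t ∈ Set.Icc (0:ℝ) T := ⟨ht.1, ht.2.le⟩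
  set c := ft t (stopped ω t) with hcdef
  set c' := fw t (stopped ω t) with hc'def
  -- `fw t ω = fw t (stopped ω t)` since the two points are at `d_∞`-distance 0
  have hfw_eq : fw t ω = c' := by
    have h0 : dInf T (t, ω) (t, stopped ω t) ≤ 0 := by
      have := dInf_le' (t := t) (t' := t) (ω := ω) (ω' := stopped ω t) h0T (C := 0)
        (fun σ => by
          have he : stopped ω t (min t σ) = ω (min t σ) := by
            simp [stopped, min_eq_left (min_le_left t σ)]
          rw [he, sub_self, abs_zero])
      simpa using this
    by_contra hne
    have hεp : 0 < |c' - fw t ω| := abs_pos.2 (sub_ne_zero_of_ne (Ne.symm hne))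
    obtain ⟨δ, hδ, H⟩ := hfwC t htT ω hω _ hεp
    exact absurd (H t htT (stopped ω t) hωt (lt_of_le_of_lt h0 hδ)) (lt_irrefl _)
  rw [hfw_eq]
  unfold HasDVertDerivAt
  rw [Metric.tendsto_nhdsWithin_nhds]
  intro ε hε
  have hε' : 0 < ε/4 := by linarith
  obtain ⟨δ₁, hδ₁, H₁⟩ := hftC t htT (stopped ω t) hωt (ε/4) hε'
  obtain ⟨δ₂, hδ₂, H₂⟩ := hfwC t htT (stopped ω t) hωt (ε/4) hε'
  refine ⟨min (min (δ₁/4) (δ₂/4)) (T - t), by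
      have h1 : 0 < T - t := by linarith [ht.2]
      have h2 : 0 < δ₁/4 := by linarith
      have h3 : 0 < δ₂/4 := by linarith
      exact lt_min (lt_min h2 h3) h1, ?_⟩
  intro h hh hdist
  have hh0 : (0:ℝ) < h := hh
  rw [Real.dist_eq, sub_zero, abs_of_pos hh0] at hdist
  have hhδ₁ : 3 * h < δ₁ := by
    have := lt_of_lt_of_le hdist (le_trans (min_le_left _ _) (min_le_left _ _)); linarith
  have hhδ₂ : 3 * h < δ₂ := by
    have := lt_of_lt_of_le hdist (le_trans (min_le_left _ _) (min_le_right _ _)); linarith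
  have hthT : t + h ≤ T := by
    have := lt_of_lt_of_le hdist (min_le_right _ _); linarith
  have hthIcc : t + h ∈ Set.Icc (0:ℝ) T := ⟨by linarith [ht.1], hthT⟩
  -- Claim 1: the staircase/continuity estimate
  have htarget : Cadlag T (fun s => stopped ω t s + chi t h s) :=
    cadlag_add_cont hωt (continuous_chi t h hh0.le)
  have claim1 : |f (t + h) (fun s => stopped ω t s + chi t h s) - f t (stopped ω t)
      - h * (c + c')| ≤ 2 * (ε/4) * h := by
    refine le_of_forall_pos_le_add ?_
    intro ε'' hε''
    obtain ⟨δ₃, hδ₃, H₃⟩ := hfC (t + h) hthIcc _ htarget ε'' hε''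
    obtain ⟨n, hngt⟩ := exists_nat_gt (h / δ₃)
    have hn1 : 1 ≤ n := by
      by_contra hc
      push_neg at hc
      interval_cases n
      · simp at hngt
        have : 0 < h / δ₃ := div_pos hh0 hδ₃
        linarith
    have hnR : (0:ℝ) < n := by exact_mod_cast Nat.lt_of_lt_of_le Nat.zero_lt_one hn1
    have hkδ : h / n < δ₃ := by
      rw [div_lt_iff₀ hnR]
      rw [div_lt_iff₀ hδ₃] at hngt
      linarith
    have happrox := stair_est hfC hhd hvd hω ht hh0 hthT H₁ H₂ hhδ₁ hhδ₂ hn1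
    have hβcad : Cadlag T (approxPath ω t (h/n) n) := cadlag_approx hω ht (h/n) n
    have hclose : |f (t + h) (approxPath ω t (h/n) n)
        - f (t + h) (fun s => stopped ω t s + chi t h s)| < ε'' := by
      apply H₃ (t + h) hthIcc _ hβcad
      refine lt_of_le_of_lt (dInf_le' h0T (C := h/n) ?_) ?_
      · intro σ
        have hk : (0:ℝ) < h/n := div_pos hh0 hnR
        have := approx_close (ω := ω) (t := t) hk n (min (t+h) σ)
        rw [show (n:ℝ) * (h/n) = h from by field_simp] at this
        have e1 : stopped ω t (min (t+h) σ) + chi t h (min (t+h) σ)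
            = (fun s => stopped ω t s + chi t h s) (min (t+h) σ) := rfl
        rw [abs_sub_comm]
        rw [e1] at this
        exact this
      · simp only [sub_self, abs_zero, zero_add]
        exact hkδ
    calc |f (t + h) (fun s => stopped ω t s + chi t h s) - f t (stopped ω t) - h * (c + c')|
        ≤ |f (t + h) (approxPath ω t (h/n) n) - f t (stopped ω t) - h * (c + c')|
          + |f (t + h) (approxPath ω t (h/n) n)
              - f (t + h) (fun s => stopped ω t s + chi t h s)| := by
          have habs : ∀ X Y : ℝ, |X - Y| ≤ |X| + |Y| := fun X Y => abs_sub _ _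
          have hid : f (t + h) (fun s => stopped ω t s + chi t h s) - f t (stopped ω t)
              - h * (c + c')
              = (f (t + h) (approxPath ω t (h/n) n) - f t (stopped ω t) - h * (c + c'))
              - (f (t + h) (approxPath ω t (h/n) n)
                  - f (t + h) (fun s => stopped ω t s + chi t h s)) := by ring
          rw [hid]
          exact abs_sub _ _
      _ ≤ 2 * (ε/4) * h + ε'' := add_le_add happrox hclose.le
  -- Claim 2: the pure horizontal estimate
  have claim2 : |f (t + h) (stopped ω t) - f t (stopped ω t) - h * c| ≤ (ε/4) * h := by
    have hband : ∀ s ∈ Set.Ico t (t + h), |ft s (stopped ω t) - c| ≤ ε/4 := by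
      intro s hs
      have hsT : s ∈ Set.Icc (0:ℝ) T := ⟨le_trans ht.1 hs.1, le_trans hs.2.le hthT⟩
      refine (H₁ s hsT (stopped ω t) hωt ?_).le
      refine lt_of_le_of_lt (dInf_eq_of_constAfter h0T (constAfter_stopped ω t)
        (le_refl t) hs.1) ?_
      rw [abs_sub_comm, abs_of_nonneg (by linarith [hs.1])]
      linarith [hs.2]
    have := horiz_est hfC hhd hωt (by linarith : t ≤ t + h) ht.1 hthT
      (constAfter_stopped ω t) hband
    rw [show t + h - t = h from by ring] at this
    exact this
  -- combine
  rw [Real.dist_eq]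
  have hkey : |f (t + h) (fun s => stopped ω t s + chi t h s) - f (t + h) (stopped ω t)
      - h * c'| ≤ 3 * (ε/4) * h := by
    have hid : f (t + h) (fun s => stopped ω t s + chi t h s) - f (t + h) (stopped ω t)
        - h * c'
        = (f (t + h) (fun s => stopped ω t s + chi t h s) - f t (stopped ω t) - h * (c + c'))
        - (f (t + h) (stopped ω t) - f t (stopped ω t) - h * c) := by ring
    rw [hid]
    calc |_ - _| ≤ _ := abs_sub _ _
      _ ≤ 2 * (ε/4) * h + (ε/4) * h := add_le_add claim1 claim2
      _ = 3 * (ε/4) * h := by ring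
  have hdiv : (f (t + h) (fun s => stopped ω t s + chi t h s) - f (t + h) (stopped ω t)) / h
      - c' = (f (t + h) (fun s => stopped ω t s + chi t h s) - f (t + h) (stopped ω t)
        - h * c') / h := by
    field_simp
  rw [hdiv, abs_div, abs_of_pos hh0, div_lt_iff₀ hh0]
  calc |f (t + h) (fun s => stopped ω t s + chi t h s) - f (t + h) (stopped ω t) - h * c'|
      ≤ 3 * (ε/4) * h := hkey
    _ < ε * h := by nlinarith
end
end

section
/- (Lemma A1) Let f ∈ C(Λ), let X ∈ D([0,T],ℝ) and let (X_n)_{n≥1} be a sequence in D([0,T],ℝ) with ‖X_n − X‖_T → 0 as n → ∞. Then sup_{t∈[0,T]} |f(t,X_n) − f(t,X)| → 0 as n → ∞. -/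
open Filter Set MeasureTheory Topology

noncomputable section

lemma dInf_le_of (T : ℝ) (hT : 0 ≤ T) (t t' : ℝ) (ω ω' : ℝ → ℝ) (C : ℝ)
    (h : ∀ s ∈ Set.Icc (0:ℝ) T, |ω (min t s) - ω' (min t' s)| ≤ C) :
    dInf T (t, ω) (t', ω') ≤ |t - t'| + C := by
  haveI : Nonempty (Set.Icc (0:ℝ) T) := ⟨⟨0, le_refl 0, hT⟩⟩
  have hsup : (⨆ s : Set.Icc (0:ℝ) T, |ω (min t ↑s) - ω' (min t' ↑s)|) ≤ C :=
    ciSup_le fun s => h s.1 s.2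
  unfold dInf
  exact add_le_add le_rfl hsup

lemma aux_contra (T : ℝ) (f : ℝ → (ℝ → ℝ) → ℝ) (hf : ContOnLambda T f)
    (X : ℝ → ℝ) (hX : Cadlag T X) (τ : ℝ) (hτ : τ ∈ Set.Icc (0:ℝ) T)
    (Y : ℝ → ℝ) (hY : Cadlag T Y) (ε : ℝ) (hε : 0 < ε)
    (u : ℕ → ℝ) (hu : ∀ k, u k ∈ Set.Icc (0:ℝ) T)
    (v : ℕ → ℝ → ℝ) (hv : ∀ k, Cadlag T (v k))
    (hbad : ∀ k, ε ≤ |f (u k) (v k) - f (u k) X|)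
    (hd : ∀ δ > 0, ∃ k, dInf T (τ, Y) (u k, X) < δ ∧ dInf T (τ, Y) (u k, v k) < δ) :
    False := by
  obtain ⟨δ, hδ, hδf⟩ := hf τ hτ Y hY (ε/2) (half_pos hε)
  obtain ⟨k, h1, h2⟩ := hd δ hδ
  have hA := hδf (u k) (hu k) X hX h1
  have hB := hδf (u k) (hu k) (v k) (hv k) h2
  have hbk := hbad k
  have htri : |f (u k) (v k) - f (u k) X| ≤
      |f (u k) (v k) - f τ Y| + |f (u k) X - f τ Y| := by
    calc |f (u k) (v k) - f (u k) X|
        ≤ |f (u k) (v k) - f τ Y| + |f τ Y - f (u k) X| := abs_sub_le _ _ _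
      _ = |f (u k) (v k) - f τ Y| + |f (u k) X - f τ Y| := by rw [abs_sub_comm (f τ Y)]
  linarith

lemma cadlag_leftStop (T : ℝ) (X : ℝ → ℝ) (hX : Cadlag T X) (τ : ℝ)
    (hτT : τ ≤ T) (l : ℝ)
    (hl : Filter.Tendsto X (nhdsWithin τ (Set.Iio τ)) (nhds l)) :
    Cadlag T (fun s => if s < τ then X s else l) := by
  constructor
  · intro t ht
    rcases lt_or_ge t τ with h | h
    · have hev : (fun s => if s < τ then X s else l) =ᶠ[nhdsWithin t (Set.Ici t)] X := by
        filter_upwards [nhdsWithin_le_nhds (Iio_mem_nhds h)] with s hs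
        have hs' : s < τ := hs
        simp [hs']
      exact (hX.1 t ht).congr_of_eventuallyEq hev (if_pos h)
    · have hev : (fun s => if s < τ then X s else l) =ᶠ[nhdsWithin t (Set.Ici t)]
          (fun _ : ℝ => l) := by
        filter_upwards [self_mem_nhdsWithin] with s hs
        have hs' : ¬ s < τ := not_lt.mpr (h.trans hs)
        simp [hs']
      exact continuousWithinAt_const.congr_of_eventuallyEq hev (if_neg (not_lt.mpr h))
  · intro t ht
    rcases le_or_gt t τ with h | h
    · obtain ⟨m, hm⟩ := hX.2 t ht
      refine ⟨m, hm.congr' ?_⟩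
      filter_upwards [self_mem_nhdsWithin] with s hs
      have hs' : s < τ := lt_of_lt_of_le hs h
      simp [hs']
    · refine ⟨l, ?_⟩
      have hev : (fun _ : ℝ => l) =ᶠ[nhdsWithin t (Set.Iio t)]
          (fun s => if s < τ then X s else l) := by
        filter_upwards [nhdsWithin_le_nhds (Ioi_mem_nhds h)] with s hs
        have hs' : ¬ s < τ := not_lt.mpr (le_of_lt hs)
        simp [hs']
      exact tendsto_const_nhds.congr' hev

lemma inv_nat_small {δ : ℝ} (hδ : 0 < δ) : ∀ᶠ k : ℕ in Filter.atTop, ((k:ℝ)+1)⁻¹ < δ := by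
  have h0 : Filter.Tendsto (fun k : ℕ => ((k:ℝ)+1)⁻¹) Filter.atTop (nhds 0) := by
    simpa using (tendsto_one_div_add_atTop_nhds_zero_nat : Filter.Tendsto (fun n : ℕ => 1 / ((n : ℝ) + 1)) Filter.atTop (nhds 0))
  exact h0.eventually (eventually_lt_nhds hδ)

lemma key_unif (T : ℝ) (hT : 0 < T) (f : ℝ → (ℝ → ℝ) → ℝ) (hf : ContOnLambda T f)
    (X : ℝ → ℝ) (hX : Cadlag T X) :
    ∀ ε > 0, ∃ δ > 0, ∀ t ∈ Set.Icc (0:ℝ) T, ∀ ω' : ℝ → ℝ, Cadlag T ω' →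
      (∀ s ∈ Set.Icc (0:ℝ) T, |ω' s - X s| < δ) → |f t ω' - f t X| < ε := by
  by_contra hcon
  push_neg at hcon
  obtain ⟨ε, hε, H⟩ := hcon
  have H' : ∀ k : ℕ, ∃ t ∈ Set.Icc (0:ℝ) T, ∃ ω' : ℝ → ℝ, Cadlag T ω' ∧
      (∀ s ∈ Set.Icc (0:ℝ) T, |ω' s - X s| < ((k:ℝ)+1)⁻¹) ∧ ε ≤ |f t ω' - f t X| := by
    intro k
    obtain ⟨t, ht, ω', h1, h2, h3⟩ := H (((k:ℝ)+1)⁻¹) (by positivity)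
    exact ⟨t, ht, ω', h1, h2, h3⟩
  choose t ht ω hωc hωs hωf using H'
  obtain ⟨τ, hτ, φ, hφ, hlim⟩ := isCompact_Icc.tendsto_subseq ht
  rcases Classical.em (∃ᶠ k in Filter.atTop, t (φ k) < τ) with hfr | hfr
  · -- case A: a subsequence from the left
    obtain ⟨ψ, hψ, hψlt⟩ := Filter.extraction_of_frequently_atTop hfr
    set σ : ℕ → ℕ := φ ∘ ψ with hσdef
    have hσ : StrictMono σ := hφ.comp hψ
    have hulim : Filter.Tendsto (fun k => t (σ k)) Filter.atTop (nhds τ) :=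
      hlim.comp hψ.tendsto_atTop
    have hτ0 : 0 < τ := lt_of_le_of_lt (ht (σ 0)).1 (hψlt 0)
    obtain ⟨l, hl⟩ := hX.2 τ ⟨hτ0, hτ.2⟩
    set Y : ℝ → ℝ := fun s => if s < τ then X s else l with hYdef
    have hY : Cadlag T Y := cadlag_leftStop T X hX τ hτ.2 l hl
    refine aux_contra T f hf X hX τ hτ Y hY ε hε (fun k => t (σ k)) (fun k => ht (σ k))
      (fun k => ω (σ k)) (fun k => hωc (σ k)) (fun k => hωf (σ k)) ?_
    intro δ hδ
    obtain ⟨θ, hθ, hθP⟩ := Metric.tendsto_nhdsWithin_nhds.mp hl (δ/8) (by linarith)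
    have hev1 : ∀ᶠ k in Filter.atTop, dist (t (σ k)) τ < min θ (δ/8) :=
      (Metric.tendsto_nhds.mp hulim) _ (lt_min hθ (by linarith))
    have hev2 : ∀ᶠ k : ℕ in Filter.atTop, ((k:ℝ)+1)⁻¹ < δ/8 := inv_nat_small (by linarith)
    obtain ⟨k, hk1, hk2⟩ := (hev1.and hev2).exists
    have hklt : t (σ k) < τ := hψlt k
    have hkd : τ - t (σ k) < min θ (δ/8) := by
      rw [Real.dist_eq, abs_sub_comm, abs_of_pos (by linarith)] at hk1
      exact hk1
    have hXl : ∀ w, t (σ k) ≤ w → w < τ → |X w - l| < δ/8 := by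
      intro w hw1 hw2
      have : dist w τ < θ := by
        rw [Real.dist_eq, abs_sub_comm, abs_of_pos (by linarith)]
        have := lt_of_lt_of_le hkd (min_le_left _ _)
        linarith
      exact hθP hw2 this
    have hbase : ∀ s ∈ Set.Icc (0:ℝ) T, |Y (min τ s) - X (min (t (σ k)) s)| ≤ δ/4 := by
      intro s hs
      rcases le_or_gt s (t (σ k)) with hsle | hsgt
      · have h1 : min τ s = s := min_eq_right (le_of_lt (lt_of_le_of_lt hsle hklt))
        have h2 : min (t (σ k)) s = s := min_eq_right hsle
        rw [h1, h2]
        have : Y s = X s := if_pos (lt_of_le_of_lt hsle hklt)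
        rw [this]
        simp; linarith
      · have h2 : min (t (σ k)) s = t (σ k) := min_eq_left (le_of_lt hsgt)
        rw [h2]
        have hul : |X (t (σ k)) - l| < δ/8 := hXl _ le_rfl hklt
        rcases lt_or_ge s τ with hsτ | hsτ
        · have h1 : min τ s = s := min_eq_right (le_of_lt hsτ)
          rw [h1]
          have hYs : Y s = X s := if_pos hsτ
          rw [hYs]
          have hsl : |X s - l| < δ/8 := hXl s (le_of_lt hsgt) hsτ
          calc |X s - X (t (σ k))| ≤ |X s - l| + |l - X (t (σ k))| := abs_sub_le _ _ _
            _ = |X s - l| + |X (t (σ k)) - l| := by rw [abs_sub_comm l]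
            _ ≤ δ/4 := by linarith
        · have h1 : min τ s = τ := min_eq_left hsτ
          rw [h1]
          have hYτ : Y τ = l := if_neg (lt_irrefl τ)
          rw [hYτ, abs_sub_comm]
          linarith
    refine ⟨k, ?_, ?_⟩
    · have := dInf_le_of T (le_of_lt hT) τ (t (σ k)) Y X (δ/4) hbase
      have habs : |τ - t (σ k)| < δ/8 := by
        rw [abs_of_pos (by linarith)]
        exact lt_of_lt_of_le hkd (min_le_right _ _)
      linarith
    · have hb2 : ∀ s ∈ Set.Icc (0:ℝ) T,
          |Y (min τ s) - ω (σ k) (min (t (σ k)) s)| ≤ δ/4 + δ/4 := by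
        intro s hs
        have hm : min (t (σ k)) s ∈ Set.Icc (0:ℝ) T :=
          ⟨le_min (ht (σ k)).1 hs.1, le_trans (min_le_right _ _) hs.2⟩
        have hsmall : |ω (σ k) (min (t (σ k)) s) - X (min (t (σ k)) s)| < ((k:ℝ)+1)⁻¹ := by
          have h1 := hωs (σ k) _ hm
          have h2 : ((σ k:ℝ)+1)⁻¹ ≤ ((k:ℝ)+1)⁻¹ := by
            apply inv_anti₀ (by positivity)
            have hk : (k:ℝ) ≤ (σ k : ℝ) := Nat.cast_le.mpr hσ.le_apply
            linarith
          linarith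
        calc |Y (min τ s) - ω (σ k) (min (t (σ k)) s)|
            ≤ |Y (min τ s) - X (min (t (σ k)) s)| +
              |X (min (t (σ k)) s) - ω (σ k) (min (t (σ k)) s)| := abs_sub_le _ _ _
          _ ≤ δ/4 + δ/4 := by
              have := hbase s hs
              rw [abs_sub_comm] at hsmall
              linarith
      have := dInf_le_of T (le_of_lt hT) τ (t (σ k)) Y (ω (σ k)) (δ/4 + δ/4) hb2
      have habs : |τ - t (σ k)| < δ/8 := by
        rw [abs_of_pos (by linarith)]
        exact lt_of_lt_of_le hkd (min_le_right _ _)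
      linarith
  · -- case B: eventually t (φ k) ≥ τ
    have hev : ∀ᶠ k in Filter.atTop, τ ≤ t (φ k) := by
      have := Filter.not_frequently.mp hfr
      filter_upwards [this] with k hk
      exact not_lt.mp hk
    obtain ⟨ψ, hψ, hψge⟩ := Filter.extraction_of_frequently_atTop hev.frequently
    set σ : ℕ → ℕ := φ ∘ ψ with hσdef
    have hσ : StrictMono σ := hφ.comp hψ
    have hulim : Filter.Tendsto (fun k => t (σ k)) Filter.atTop (nhds τ) :=
      hlim.comp hψ.tendsto_atTop
    refine aux_contra T f hf X hX τ hτ X hX ε hε (fun k => t (σ k)) (fun k => ht (σ k))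
      (fun k => ω (σ k)) (fun k => hωc (σ k)) (fun k => hωf (σ k)) ?_
    intro δ hδ
    have hright : ∃ η > 0, ∀ w, τ ≤ w → w ≤ T → w - τ < η → |X w - X τ| < δ/4 := by
      rcases lt_or_ge τ T with hτT | hτT
      · obtain ⟨η, hη, hηP⟩ :=
          Metric.continuousWithinAt_iff.mp (hX.1 τ ⟨hτ.1, hτT⟩) (δ/4) (by linarith)
        refine ⟨η, hη, fun w hw1 _ hw3 => ?_⟩
        have : dist w τ < η := by
          rw [Real.dist_eq, abs_of_nonneg (by linarith)]; exact hw3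
        simpa [Real.dist_eq] using hηP hw1 this
      · refine ⟨1, one_pos, fun w hw1 hw2 _ => ?_⟩
        have hτT' : τ = T := le_antisymm hτ.2 hτT
        have : w = τ := le_antisymm (hτT' ▸ hw2) hw1
        rw [this]; simp; linarith
    obtain ⟨η, hη, hηP⟩ := hright
    have hev1 : ∀ᶠ k in Filter.atTop, dist (t (σ k)) τ < min η (δ/4) :=
      (Metric.tendsto_nhds.mp hulim) _ (lt_min hη (by linarith))
    have hev2 : ∀ᶠ k : ℕ in Filter.atTop, ((k:ℝ)+1)⁻¹ < δ/4 := inv_nat_small (by linarith)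
    obtain ⟨k, hk1, hk2⟩ := (hev1.and hev2).exists
    have hkge : τ ≤ t (σ k) := hψge k
    have hkd : t (σ k) - τ < min η (δ/4) := by
      rw [Real.dist_eq, abs_of_nonneg (by linarith)] at hk1
      exact hk1
    have hbase : ∀ s ∈ Set.Icc (0:ℝ) T, |X (min τ s) - X (min (t (σ k)) s)| ≤ δ/4 := by
      intro s hs
      rcases le_or_gt s τ with hsle | hsgt
      · rw [min_eq_right hsle, min_eq_right (hsle.trans hkge)]
        simp; linarith
      · rw [min_eq_left (le_of_lt hsgt)]
        set w := min (t (σ k)) s with hw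
        have hw1 : τ ≤ w := le_min hkge (le_of_lt hsgt)
        have hw2 : w ≤ T := le_trans (min_le_left _ _) (ht (σ k)).2
        have hw3 : w - τ < η := by
          have : w - τ ≤ t (σ k) - τ := by
            have := min_le_left (t (σ k)) s
            linarith
          have := lt_of_lt_of_le hkd (min_le_left _ _)
          linarith
        have := hηP w hw1 hw2 hw3
        rw [abs_sub_comm]
        linarith
    refine ⟨k, ?_, ?_⟩
    · have := dInf_le_of T (le_of_lt hT) τ (t (σ k)) X X (δ/4) hbase
      have habs : |τ - t (σ k)| < δ/4 := by
        rw [abs_sub_comm, abs_of_nonneg (by linarith)]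
        exact lt_of_lt_of_le hkd (min_le_right _ _)
      linarith
    · have hb2 : ∀ s ∈ Set.Icc (0:ℝ) T,
          |X (min τ s) - ω (σ k) (min (t (σ k)) s)| ≤ δ/4 + δ/4 := by
        intro s hs
        have hm : min (t (σ k)) s ∈ Set.Icc (0:ℝ) T :=
          ⟨le_min (ht (σ k)).1 hs.1, le_trans (min_le_right _ _) hs.2⟩
        have hsmall : |ω (σ k) (min (t (σ k)) s) - X (min (t (σ k)) s)| < ((k:ℝ)+1)⁻¹ := by
          have h1 := hωs (σ k) _ hm
          have h2 : ((σ k:ℝ)+1)⁻¹ ≤ ((k:ℝ)+1)⁻¹ := by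
            apply inv_anti₀ (by positivity)
            have hk : (k:ℝ) ≤ (σ k : ℝ) := Nat.cast_le.mpr hσ.le_apply
            linarith
          linarith
        calc |X (min τ s) - ω (σ k) (min (t (σ k)) s)|
            ≤ |X (min τ s) - X (min (t (σ k)) s)| +
              |X (min (t (σ k)) s) - ω (σ k) (min (t (σ k)) s)| := abs_sub_le _ _ _
          _ ≤ δ/4 + δ/4 := by
              have := hbase s hs
              rw [abs_sub_comm] at hsmall
              linarith
      have := dInf_le_of T (le_of_lt hT) τ (t (σ k)) X (ω (σ k)) (δ/4 + δ/4) hb2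
      have habs : |τ - t (σ k)| < δ/4 := by
        rw [abs_sub_comm, abs_of_nonneg (by linarith)]
        exact lt_of_lt_of_le hkd (min_le_right _ _)
      linarith

/-- Lemma A1: let `f ∈ C(Λ)`, let `X ∈ D([0,T],ℝ)` and `(X_n)` a
sequence of càdlàg paths with `‖X_n − X‖_T → 0`. Then
`sup_{t∈[0,T]} |f(t,X_n) − f(t,X)| → 0`. -/
theorem stmt14 (T : ℝ) (hT : 0 < T) (f : ℝ → (ℝ → ℝ) → ℝ) (hf : ContOnLambda T f)
    (X : ℝ → ℝ) (hX : Cadlag T X) (Xn : ℕ → ℝ → ℝ) (hXn : ∀ n, Cadlag T (Xn n))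
    (hconv : TendstoUniformlyOn Xn X Filter.atTop (Set.Icc 0 T)) :
    TendstoUniformlyOn (fun n t => f t (Xn n)) (fun t => f t X)
      Filter.atTop (Set.Icc 0 T) := by
  rw [Metric.tendstoUniformlyOn_iff]
  intro ε hε
  obtain ⟨δ, hδ, hδP⟩ := key_unif T hT f hf X hX ε hε
  have hconv' := Metric.tendstoUniformlyOn_iff.mp hconv δ hδ
  filter_upwards [hconv'] with n hn
  intro x hx
  have hsmall : ∀ s ∈ Set.Icc (0:ℝ) T, |Xn n s - X s| < δ := by
    intro s hs
    have := hn s hs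
    rwa [Real.dist_eq, abs_sub_comm] at this
  have := hδP x hx (Xn n) (hXn n) hsmall
  rwa [Real.dist_eq, abs_sub_comm]
end
end
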